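/- arXiv:2011.10209 — 4 statements merged into one kernel-verified Lean document; each statement's English description precedes it below -/
import Mathlib

section
/- Let E be a set and 𝒯 a collection of subsets of E. Define the orthogonal 𝒯⊥ = {u' ⊆ E | ∀ u ∈ 𝒯, u ∩ u' ≠ ∅}. Then the biorthogonal 𝒯⊥⊥ equals the upward closure of 𝒯, i.e. 𝒯⊥⊥ = {v ⊆ E | ∃ u ∈ 𝒯, u ⊆ v}. -/
/-- The orthogonal of a collection of subsets of `E`. -/
def orth {E : Type*} (T : Set (Set E)) : Set (Set E) :=
  {u' : Set E | ∀ u ∈ T, (u ∩ u').Nonempty}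

/-- The biorthogonal of `T` is the upward closure of `T`. -/
theorem biorth_eq_upward_closure {E : Type*} (T : Set (Set E)) :
    orth (orth T) = {v : Set E | ∃ u ∈ T, u ⊆ v} := by
  ext v
  constructor
  · intro hv
    by_contra h
    simp only [Set.mem_setOf_eq] at h
    push_neg at h
    have hvc : vᶜ ∈ orth T := by
      intro u hu
      obtain ⟨x, hx, hxv⟩ := Set.not_subset.mp (h u hu)
      exact ⟨x, hx, hxv⟩
    obtain ⟨x, hx1, hx2⟩ := hv _ hvc
    exact hx1 hx2
  · rintro ⟨u, hu, huv⟩ u' hu'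
    obtain ⟨x, hx1, hx2⟩ := hu' u hu
    exact ⟨x, hx2, huv hx1⟩
end

section
/- Let F : Rel → Rel be a functor on the category of sets and relations which is locally continuous (i.e. for each directed set D of relations in Rel(E,E'), F(⋃D) = ⋃_{s∈D} F(s)). If E ⊆ E', letting ι ∈ Rel(E,E') be the inclusion relation {(a,a) | a ∈ E}, then F(ι) is the graph of an injective function F(E) → F(E'). -/
/-- Relational composition (diagrammatic order). -/
def relComp {U : Type*} (r s : Set (U × U)) : Set (U × U) :=
  {p | ∃ b, (p.1, b) ∈ r ∧ (b, p.2) ∈ s}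

/-- The diagonal (identity/inclusion) relation on a set `E`. -/
def diagRel {U : Type*} (E : Set U) : Set (U × U) :=
  {p | p.1 = p.2 ∧ p.1 ∈ E}

/-- A functor on the category `Rel` of sets (subsets of a universe `U`)
and relations. -/
structure RelFunctor (U : Type*) where
  obj : Set U → Set U
  map : (E F : Set U) → Set (U × U) → Set (U × U)
  map_sub : ∀ E F r, r ⊆ E ×ˢ F → map E F r ⊆ obj E ×ˢ obj F
  map_id : ∀ E, map E E (diagRel E) = diagRel (obj E)
  map_comp : ∀ E F G r s, r ⊆ E ×ˢ F → s ⊆ F ×ˢ G →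
    map E G (relComp r s) = relComp (map E F r) (map F G s)

/-- Local continuity: commutation with directed unions of morphisms. -/
def LocallyContinuous {U : Type*} (F : RelFunctor U) : Prop :=
  ∀ (E E' : Set U) (D : Set (Set (U × U))), D.Nonempty → DirectedOn (· ⊆ ·) D →
    (∀ r ∈ D, r ⊆ E ×ˢ E') → F.map E E' (⋃₀ D) = ⋃ r ∈ D, F.map E E' r

/-- A locally continuous functor on `Rel` maps inclusion relations to graphs of
injective functions `F(E) → F(E')`. -/
theorem locallyContinuous_map_inclusion_injective {U : Type*} (F : RelFunctor U)
    (hc : LocallyContinuous F) (E E' : Set U) (hEE' : E ⊆ E') :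
    (∀ a ∈ F.obj E, ∃! b, (a, b) ∈ F.map E E' (diagRel E)) ∧
      (∀ a a' b, (a, b) ∈ F.map E E' (diagRel E) → (a', b) ∈ F.map E E' (diagRel E) →
        a = a') := by
  -- ι : E → E' and π : E' → E are both the diagonal relation on E.
  have hι : diagRel E ⊆ E ×ˢ E' := by
    rintro ⟨a, b⟩ ⟨h, ha⟩; obtain rfl : a = b := h; exact ⟨ha, hEE' ha⟩
  have hπ : diagRel E ⊆ E' ×ˢ E := by
    rintro ⟨a, b⟩ ⟨h, ha⟩; obtain rfl : a = b := h; exact ⟨hEE' ha, ha⟩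
  have hdd : diagRel E ⊆ diagRel E' := by
    rintro ⟨a, b⟩ ⟨h, ha⟩; exact ⟨h, hEE' ha⟩
  have hcomp : relComp (diagRel E) (diagRel E) = diagRel E := by
    ext ⟨a, b⟩
    constructor
    · rintro ⟨c, ⟨h1, ha⟩, ⟨h2, _⟩⟩
      obtain rfl : a = c := h1
      exact ⟨h2, ha⟩
    · rintro ⟨h, ha⟩
      obtain rfl : a = b := h
      exact ⟨a, ⟨rfl, ha⟩, ⟨rfl, ha⟩⟩
  set Fι := F.map E E' (diagRel E) with hFι
  set Fπ := F.map E' E (diagRel E) with hFπ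
  -- ι ∘ π = id_E, so Fι ∘ Fπ = diag (F.obj E)
  have h1 : relComp Fι Fπ = diagRel (F.obj E) := by
    rw [hFι, hFπ, ← F.map_comp E E' E _ _ hι hπ, hcomp, F.map_id]
  -- continuity: F.map E' E' (diagRel E) ⊆ diagRel (F.obj E')
  have h2 : F.map E' E' (diagRel E) ⊆ diagRel (F.obj E') := by
    have hD := hc E' E' {diagRel E, diagRel E'} ⟨_, Set.mem_insert _ _⟩
      (by
        rintro r (rfl | rfl) s (rfl | rfl)
        · exact ⟨diagRel E, Set.mem_insert _ _, le_refl _, le_refl _⟩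
        · exact ⟨diagRel E', Set.mem_insert_of_mem _ rfl, hdd, le_refl _⟩
        · exact ⟨diagRel E', Set.mem_insert_of_mem _ rfl, le_refl _, hdd⟩
        · exact ⟨diagRel E', Set.mem_insert_of_mem _ rfl, le_refl _, le_refl _⟩)
      (by
        rintro r (rfl | rfl)
        · rintro ⟨a, b⟩ ⟨h, ha⟩; obtain rfl : a = b := h; exact ⟨hEE' ha, hEE' ha⟩
        · rintro ⟨a, b⟩ ⟨h, ha⟩; obtain rfl : a = b := h; exact ⟨ha, ha⟩)
    have hU : ⋃₀ ({diagRel E, diagRel E'} : Set (Set (U × U))) = diagRel E' := by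
      rw [Set.sUnion_insert, Set.sUnion_singleton, Set.union_eq_self_of_subset_left hdd]
    rw [hU, F.map_id] at hD
    intro p hp
    rw [hD]
    exact Set.mem_biUnion (Set.mem_insert _ _) hp
  -- π ∘ ι = id_E ⊆ id_{E'}, so Fπ ∘ Fι ⊆ diag (F.obj E')
  have h3 : relComp Fπ Fι ⊆ diagRel (F.obj E') := by
    rw [hFι, hFπ, ← F.map_comp E' E E' _ _ hπ hι, hcomp]
    exact h2
  -- key: for a ∈ F.obj E, there's b₀ with (a,b₀) ∈ Fι, (b₀,a) ∈ Fπ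
  have key : ∀ a ∈ F.obj E, ∃ b₀, (a, b₀) ∈ Fι ∧ (b₀, a) ∈ Fπ := by
    intro a ha
    have : (a, a) ∈ relComp Fι Fπ := by rw [h1]; exact ⟨rfl, ha⟩
    exact this
  -- functionality
  have func : ∀ a b b', a ∈ F.obj E → (a, b) ∈ Fι → (a, b') ∈ Fι → b = b' := by
    intro a b b' ha hb hb'
    obtain ⟨b₀, hb₀, hπb₀⟩ := key a ha
    have e1 : (b₀, b) ∈ diagRel (F.obj E') := h3 ⟨a, hπb₀, hb⟩
    have e2 : (b₀, b') ∈ diagRel (F.obj E') := h3 ⟨a, hπb₀, hb'⟩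
    exact e1.1.symm.trans e2.1
  have memE : ∀ a b, (a, b) ∈ Fι → a ∈ F.obj E := by
    intro a b hab
    exact (F.map_sub E E' _ hι hab).1
  constructor
  · intro a ha
    obtain ⟨b₀, hb₀, _⟩ := key a ha
    exact ⟨b₀, hb₀, fun b hb => func a b b₀ ha hb hb₀⟩
  · intro a a' b hab ha'b
    have ha := memE a b hab
    obtain ⟨b₀, hb₀, hπb₀⟩ := key a ha
    have : b₀ = b := func a b₀ b ha hb₀ hab
    subst this
    have : (a', a) ∈ relComp Fι Fπ := ⟨b₀, ha'b, hπb₀⟩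
    rw [h1] at this
    exact this.1.symm
end

section
/- Let F : Rel → Rel be a strict locally continuous functor. Define μF = ⋃_{n∈ℕ} Fⁿ(∅). Then F(μF) = μF, and the coalgebra (μF, Id) is a final object in the category of F-coalgebras: for every set E and relation t ∈ Rel(E, F(E)) there exists a unique e ∈ Rel(E, μF) with F(e) ∘ t = e. -/
/-- Strictness: `F` maps set inclusions to set inclusions. -/
def StrictFunctor {U : Type*} (F : RelFunctor U) : Prop :=
  ∀ E E' : Set U, E ⊆ E' →
    F.obj E ⊆ F.obj E' ∧ F.map E E' (diagRel E) = diagRel (F.obj E)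


section Aux

variable {U : Type*}

lemma mem_diagRel' {A : Set U} {x y : U} :
    (x, y) ∈ diagRel A ↔ x = y ∧ x ∈ A := Iff.rfl

lemma mem_relComp' {r s : Set (U × U)} {x y : U} :
    (x, y) ∈ relComp r s ↔ ∃ b, (x, b) ∈ r ∧ (b, y) ∈ s := Iff.rfl

lemma relComp_assoc' (r s u : Set (U × U)) :
    relComp (relComp r s) u = relComp r (relComp s u) := by
  ext ⟨x, y⟩
  constructor
  · rintro ⟨b, ⟨c, hc1, hc2⟩, hb⟩; exact ⟨c, hc1, b, hc2, hb⟩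
  · rintro ⟨c, hc, b, hb1, hb2⟩; exact ⟨b, ⟨c, hc, hb1⟩, hb2⟩

lemma relComp_iUnion' (t : Set (U × U)) (f : ℕ → Set (U × U)) :
    relComp t (⋃ n, f n) = ⋃ n, relComp t (f n) := by
  ext ⟨x, y⟩
  constructor
  · rintro ⟨b, hb1, hb2⟩
    rcases Set.mem_iUnion.1 hb2 with ⟨n, hn⟩
    exact Set.mem_iUnion.2 ⟨n, b, hb1, hn⟩
  · intro h
    rcases Set.mem_iUnion.1 h with ⟨n, b, hb1, hb2⟩
    exact ⟨b, hb1, Set.mem_iUnion.2 ⟨n, hb2⟩⟩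

lemma diagRel_subset_prod {A B C : Set U} (h1 : A ⊆ B) (h2 : A ⊆ C) :
    diagRel A ⊆ B ×ˢ C := by
  rintro ⟨x, y⟩ ⟨hxy, hx⟩
  exact ⟨h1 hx, hxy ▸ h2 hx⟩

lemma relComp_diagRel_self (A : Set U) :
    relComp (diagRel A) (diagRel A) = diagRel A := by
  ext ⟨x, y⟩
  constructor
  · rintro ⟨b, ⟨h1, h2⟩, ⟨h3, h4⟩⟩; exact ⟨h1.trans h3, h2⟩
  · rintro ⟨h1, h2⟩; exact ⟨x, ⟨rfl, h2⟩, ⟨h1, h2⟩⟩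

lemma relComp_diagRel_right {A : Set U} {E : Set U} {r : Set (U × U)}
    (h : r ⊆ E ×ˢ A) : relComp r (diagRel A) = r := by
  ext ⟨x, y⟩
  constructor
  · rintro ⟨b, hb1, hby, -⟩
    change b = y at hby
    exact hby ▸ hb1
  · intro hxy; exact ⟨y, hxy, rfl, (h hxy).2⟩

lemma diagRel_empty : diagRel (∅ : Set U) = ∅ := by
  ext ⟨x, y⟩; simp [diagRel]

lemma relComp_empty_right (r : Set (U × U)) : relComp r ∅ = ∅ := by
  ext ⟨x, y⟩; simp [relComp]

lemma diagRel_iUnion (f : ℕ → Set U) :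
    diagRel (⋃ n, f n) = ⋃ n, diagRel (f n) := by
  ext ⟨x, y⟩
  constructor
  · rintro ⟨hxy, hx⟩
    rcases Set.mem_iUnion.1 hx with ⟨n, hn⟩
    exact Set.mem_iUnion.2 ⟨n, hxy, hn⟩
  · intro h
    rcases Set.mem_iUnion.1 h with ⟨n, hxy, hn⟩
    exact ⟨hxy, Set.mem_iUnion.2 ⟨n, hn⟩⟩

lemma RelFunctor.map_mono (F : RelFunctor U) (hc : LocallyContinuous F)
    {E E' : Set U} {r s : Set (U × U)} (hrs : r ⊆ s) (hsub : s ⊆ E ×ˢ E') :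
    F.map E E' r ⊆ F.map E E' s := by
  have hD : ({r, s} : Set (Set (U × U))).Nonempty := ⟨r, by simp⟩
  have hdir : DirectedOn (· ⊆ ·) ({r, s} : Set (Set (U × U))) := by
    intro a ha b hb
    refine ⟨s, by simp, ?_, ?_⟩
    · rcases ha with rfl | ha
      · exact hrs
      · rw [Set.mem_singleton_iff] at ha; exact ha ▸ le_refl _
    · rcases hb with rfl | hb
      · exact hrs
      · rw [Set.mem_singleton_iff] at hb; exact hb ▸ le_refl _
  have hall : ∀ x ∈ ({r, s} : Set (Set (U × U))), x ⊆ E ×ˢ E' := by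
    rintro x (rfl | rfl)
    · exact hrs.trans hsub
    · exact hsub
  have := hc E E' {r, s} hD hdir hall
  have hsU : ⋃₀ ({r, s} : Set (Set (U × U))) = s := by
    rw [Set.sUnion_pair, Set.union_eq_right.2 hrs]
  rw [hsU] at this
  rw [this]
  intro x hx
  exact Set.mem_biUnion (by simp : r ∈ ({r, s} : Set (Set (U × U)))) hx

/-- Key lemma: for `A ⊆ M`, `F.map M M (diagRel A) = diagRel (F.obj A)`. -/
lemma RelFunctor.map_diag_eq (F : RelFunctor U) (hc : LocallyContinuous F)
    (hstr : StrictFunctor F) {A M : Set U} (hA : A ⊆ M) :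
    F.map M M (diagRel A) = diagRel (F.obj A) := by
  have hAM : diagRel A ⊆ A ×ˢ M := diagRel_subset_prod (le_refl _) hA
  have hMA : diagRel A ⊆ M ×ˢ A := diagRel_subset_prod hA (le_refl _)
  have hAA : diagRel A ⊆ A ×ˢ A := diagRel_subset_prod (le_refl _) (le_refl _)
  have h1 : F.map A M (diagRel A) = diagRel (F.obj A) := (hstr A M hA).2
  -- decomposition of F.map M M (diagRel A)
  have h2 : F.map M M (diagRel A)
      = relComp (F.map M A (diagRel A)) (diagRel (F.obj A)) := by
    conv_lhs => rw [← relComp_diagRel_self A]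
    rw [F.map_comp M A M _ _ hMA hAM, h1]
  -- decomposition of diagRel (F.obj A)
  have h3 : diagRel (F.obj A)
      = relComp (diagRel (F.obj A)) (F.map M A (diagRel A)) := by
    conv_lhs => rw [← F.map_id A, ← relComp_diagRel_self A,
      F.map_comp A M A _ _ hAM hMA, h1]
  apply Set.Subset.antisymm
  · -- ⊆ : elements are diagonal pairs with entry in F.obj A
    have hdAM : diagRel A ⊆ diagRel M := by
      rintro ⟨x, y⟩ ⟨hxy, hx⟩; exact ⟨hxy, hA hx⟩
    have hdiagM : F.map M M (diagRel A) ⊆ diagRel (F.obj M) := by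
      have := F.map_mono hc hdAM (diagRel_subset_prod (le_refl M) (le_refl M))
      rwa [F.map_id M] at this
    rintro ⟨x, y⟩ hmem
    have hxy : x = y := (hdiagM hmem).1
    subst hxy
    have : (x, x) ∈ relComp (F.map M A (diagRel A)) (diagRel (F.obj A)) :=
      h2 ▸ hmem
    rcases this with ⟨b, -, hbx, hbA⟩
    change b = x at hbx
    exact ⟨rfl, hbx ▸ hbA⟩
  · rintro ⟨x, y⟩ ⟨hxy, hx⟩
    change x = y at hxy
    subst hxy
    have hmm : (x, x) ∈ relComp (diagRel (F.obj A)) (F.map M A (diagRel A)) :=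
      h3 ▸ (⟨rfl, hx⟩ : (x, x) ∈ diagRel (F.obj A))
    rcases hmm with ⟨b, ⟨hbx, -⟩, hb2⟩
    change x = b at hbx
    subst hbx
    rw [h2]
    exact ⟨x, hb2, rfl, hx⟩

end Aux

/-- Monotonicity of `relComp` in the second argument. -/
lemma relComp_mono_right {t r s : Set (U × U)} (h : r ⊆ s) :
    relComp t r ⊆ relComp t s := by
  rintro ⟨x, y⟩ ⟨b, hb1, hb2⟩; exact ⟨b, hb1, h hb2⟩

/-- Approximants of the anamorphism. -/
def approxRel (F : RelFunctor U) (E M : Set U) (t : Set (U × U)) : ℕ → Set (U × U)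
  | 0 => ∅
  | n + 1 => relComp t (F.map E M (approxRel F E M t n))

/-- For a strict locally continuous functor `F` on `Rel`, the set
`μF = ⋃ₙ Fⁿ(∅)` satisfies `F(μF) = μF` and `(μF, Id)` is the final
`F`-coalgebra: every coalgebra `t : E → F(E)` has a unique morphism
`e` to it, i.e. `e ⊆ E × μF` with `F(e) ∘ t = e`. -/
theorem strict_locallyContinuous_final_coalgebra {U : Type*} (F : RelFunctor U)
    (hc : LocallyContinuous F) (hs : StrictFunctor F) :
    F.obj (⋃ n : ℕ, F.obj^[n] ∅) = ⋃ n : ℕ, F.obj^[n] ∅ ∧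
      ∀ (E : Set U) (t : Set (U × U)), t ⊆ E ×ˢ F.obj E →
        ∃! e : Set (U × U), e ⊆ E ×ˢ (⋃ n : ℕ, F.obj^[n] ∅) ∧
          relComp t (F.map E (⋃ n : ℕ, F.obj^[n] ∅) e) = e := by
  set μ : Set U := ⋃ n : ℕ, F.obj^[n] ∅ with hμdef
  have hEmono : ∀ n : ℕ, F.obj^[n] (∅ : Set U) ⊆ F.obj^[n + 1] ∅ := by
    intro n
    induction n with
    | zero => simp
    | succ n ih =>
      rw [Function.iterate_succ_apply', Function.iterate_succ_apply']
      exact (hs _ _ ih).1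
  have hEchain : ∀ m n : ℕ, m ≤ n → F.obj^[m] (∅ : Set U) ⊆ F.obj^[n] ∅ := by
    intro m n h
    induction h with
    | refl => exact le_refl _
    | step _ ih => exact ih.trans (hEmono _)
  have hEμ : ∀ n : ℕ, F.obj^[n] (∅ : Set U) ⊆ μ := by
    intro n; rw [hμdef]; exact Set.subset_iUnion (fun n : ℕ => F.obj^[n] (∅ : Set U)) n
  have hdμ : diagRel μ = ⋃ n, diagRel (F.obj^[n] (∅ : Set U)) := diagRel_iUnion _
  have hkey : ∀ n : ℕ, F.map μ μ (diagRel (F.obj^[n] ∅)) = diagRel (F.obj^[n + 1] ∅) := by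
    intro n
    rw [Function.iterate_succ_apply']
    exact F.map_diag_eq hc hs (hEμ n)
  -- continuity for the chain of diagonals
  have hDcont : F.map μ μ (diagRel μ) = ⋃ n, F.map μ μ (diagRel (F.obj^[n] ∅)) := by
    have hne : (Set.range fun n : ℕ => diagRel (F.obj^[n] (∅ : Set U))).Nonempty :=
      ⟨_, ⟨0, rfl⟩⟩
    have hdir : DirectedOn (· ⊆ ·)
        (Set.range fun n : ℕ => diagRel (F.obj^[n] (∅ : Set U))) := by
      rintro a ⟨m, rfl⟩ b ⟨n, rfl⟩
      refine ⟨diagRel (F.obj^[max m n] ∅), ⟨max m n, rfl⟩, ?_, ?_⟩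
      · rintro ⟨x, y⟩ ⟨hxy, hx⟩; exact ⟨hxy, hEchain _ _ (le_max_left _ _) hx⟩
      · rintro ⟨x, y⟩ ⟨hxy, hx⟩; exact ⟨hxy, hEchain _ _ (le_max_right _ _) hx⟩
    have hall : ∀ r ∈ Set.range fun n : ℕ => diagRel (F.obj^[n] (∅ : Set U)),
        r ⊆ μ ×ˢ μ := by
      rintro r ⟨n, rfl⟩; exact diagRel_subset_prod (hEμ n) (hEμ n)
    have h := hc μ μ _ hne hdir hall
    rw [Set.sUnion_range, Set.biUnion_range] at h
    rw [hdμ]; exact h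
  have hshift : (⋃ n : ℕ, diagRel (F.obj^[n + 1] (∅ : Set U)))
      = ⋃ n, diagRel (F.obj^[n] (∅ : Set U)) := by
    apply Set.Subset.antisymm
    · exact Set.iUnion_mono' fun n => ⟨n + 1, le_refl _⟩
    · refine Set.iUnion_mono' fun n => ⟨n, ?_⟩
      rintro ⟨x, y⟩ ⟨hxy, hx⟩; exact ⟨hxy, hEmono n hx⟩
  have hpart1 : F.obj μ = μ := by
    have h0 : diagRel (F.obj μ) = diagRel μ := by
      rw [← F.map_id μ, hDcont]
      simp only [hkey]
      rw [hshift, ← hdμ]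
    ext x
    constructor <;> intro hx
    · have hm : (x, x) ∈ diagRel (F.obj μ) := ⟨rfl, hx⟩
      rw [h0] at hm
      exact hm.2
    · have hm : (x, x) ∈ diagRel μ := ⟨rfl, hx⟩
      rw [← h0] at hm
      exact hm.2
  refine ⟨hpart1, fun E t ht => ?_⟩
  set a : ℕ → Set (U × U) := approxRel F E μ t with hadef
  have ha0 : a 0 = ∅ := rfl
  have haS : ∀ n, a (n + 1) = relComp t (F.map E μ (a n)) := fun n => rfl
  have hasub : ∀ n, a n ⊆ E ×ˢ μ := by
    intro n
    induction n with
    | zero => rw [ha0]; exact Set.empty_subset _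
    | succ n ih =>
      rw [haS]
      rintro ⟨x, y⟩ ⟨b, hb1, hb2⟩
      have h1 := (ht hb1).1
      have h2 := (F.map_sub E μ _ ih hb2).2
      exact ⟨h1, hpart1 ▸ h2⟩
  have hamono : ∀ n, a n ⊆ a (n + 1) := by
    intro n
    induction n with
    | zero => rw [ha0]; exact Set.empty_subset _
    | succ n ih =>
      rw [haS, haS]
      exact relComp_mono_right (F.map_mono hc ih (hasub (n + 1)))
  have hachain : ∀ m n : ℕ, m ≤ n → a m ⊆ a n := by
    intro m n h
    induction h with
    | refl => exact le_refl _
    | step _ ih => exact ih.trans (hamono _)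
  have hainfsub : (⋃ n, a n) ⊆ E ×ˢ μ := Set.iUnion_subset hasub
  -- continuity for the chain of approximants
  have hacont : F.map E μ (⋃ n, a n) = ⋃ n, F.map E μ (a n) := by
    have hne : (Set.range a).Nonempty := ⟨a 0, ⟨0, rfl⟩⟩
    have hdir : DirectedOn (· ⊆ ·) (Set.range a) := by
      rintro x ⟨m, rfl⟩ y ⟨n, rfl⟩
      exact ⟨a (max m n), ⟨max m n, rfl⟩, hachain _ _ (le_max_left _ _),
        hachain _ _ (le_max_right _ _)⟩
    have hall : ∀ r ∈ Set.range a, r ⊆ E ×ˢ μ := by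
      rintro r ⟨n, rfl⟩; exact hasub n
    have h := hc E μ _ hne hdir hall
    rwa [Set.sUnion_range, Set.biUnion_range] at h
  have hfix : relComp t (F.map E μ (⋃ n, a n)) = ⋃ n, a n := by
    rw [hacont, relComp_iUnion']
    apply Set.Subset.antisymm
    · refine Set.iUnion_mono' fun n => ⟨n + 1, ?_⟩
      rw [haS]
    · refine Set.iUnion_mono' fun n => ⟨n, ?_⟩
      exact (hamono n).trans (by rw [haS])
  refine ⟨⋃ n, a n, ⟨hainfsub, hfix⟩, ?_⟩
  rintro e' ⟨h1, h2⟩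
  have hrestrict : ∀ n : ℕ, relComp e' (diagRel (F.obj^[n] ∅)) = a n := by
    intro n
    induction n with
    | zero =>
      rw [ha0]
      show relComp e' (diagRel (∅ : Set U)) = ∅
      rw [diagRel_empty, relComp_empty_right]
    | succ n ih =>
      rw [← hkey n, haS]
      conv_lhs => rw [← h2]
      rw [relComp_assoc',
        ← F.map_comp E μ μ e' (diagRel (F.obj^[n] ∅)) h1
          (diagRel_subset_prod (hEμ n) (hEμ n)), ih]
  calc e' = relComp e' (diagRel μ) := (relComp_diagRel_right h1).symm
    _ = ⋃ n, relComp e' (diagRel (F.obj^[n] ∅)) := by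
        rw [hdμ, relComp_iUnion']
    _ = ⋃ n, a n := by simp only [hrestrict]
end

section
/- Let ν be the interpretation of the type of flat natural numbers nat = μζ.(1 ⊕ ζ) in NUTS: its web is (isomorphic to) ℕ, and its totality is the least fixed point of the monotone operator Φ on totality candidates over ℕ given by Φ(𝒯) = {u ⊆ ℕ | 0 ∈ u or {n | n+1 ∈ u} ∈ 𝒯}. Then this least fixed point equals the set of all non-empty subsets of ℕ. -/
/-- The operator on totality candidates over `ℕ` whose least fixed point
interprets the type `nat = μζ.(1 ⊕ ζ)` in NUTS. -/
def PhiNat (T : Set (Set ℕ)) : Set (Set ℕ) :=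
  {u : Set ℕ | 0 ∈ u ∨ {n : ℕ | n + 1 ∈ u} ∈ T}

lemma mem_of_fixed (T : Set (Set ℕ)) (hfix : PhiNat T = T) :
    ∀ n : ℕ, ∀ u : Set ℕ, n ∈ u → u ∈ T := by
  intro n
  induction n with
  | zero =>
    intro u hu
    rw [← hfix]; exact Or.inl hu
  | succ n ih =>
    intro u hu
    rw [← hfix]
    exact Or.inr (ih _ hu)

/-- The totality of the NUTS interpretation of the type of flat natural
numbers is the least fixed point of `PhiNat` on totality candidates, and it
equals the collection of all non-empty subsets of `ℕ`. -/
theorem nat_totality_least_fixed_point :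
    PhiNat {u : Set ℕ | u.Nonempty} = {u : Set ℕ | u.Nonempty} ∧
    (∀ u ∈ {u : Set ℕ | u.Nonempty}, ∀ v : Set ℕ, u ⊆ v →
      v ∈ {u : Set ℕ | u.Nonempty}) ∧
    ∀ T : Set (Set ℕ), (∀ u ∈ T, ∀ v : Set ℕ, u ⊆ v → v ∈ T) →
      PhiNat T = T → {u : Set ℕ | u.Nonempty} ⊆ T := by
  refine ⟨?_, ?_, ?_⟩
  · ext u
    constructor
    · rintro (h | ⟨n, hn⟩)
      · exact ⟨0, h⟩
      · exact ⟨n + 1, hn⟩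
    · rintro ⟨n, hn⟩
      cases n with
      | zero => exact Or.inl hn
      | succ m => exact Or.inr ⟨m, hn⟩
  · rintro u ⟨n, hn⟩ v huv
    exact ⟨n, huv hn⟩
  · rintro T _ hfix u ⟨n, hn⟩
    exact mem_of_fixed T hfix n u hn
end
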